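/- Let A be a C*-algebra and let p, q ∈ A be projections. Then there exists a sequence (xₖ) in A with ‖xₖ* q xₖ − p‖ → 0 if and only if there exists v ∈ A with p = v v* and v* v ≤ q. -/

import Mathlib

open Filter



section CuntzAux

variable {A : Type*} [NonUnitalCStarAlgebra A] [PartialOrder A] [StarOrderedRing A]

lemma aux_eq_zero_of_mul_star_self {t : A} (h : t * star t = 0) : t = 0 := by
  have h1 : ‖t‖ * ‖t‖ = 0 := by rw [← CStarRing.norm_self_mul_star, h, norm_zero]
  have : ‖t‖ = 0 := by nlinarith [norm_nonneg t]
  simpa using this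

lemma aux_eq_zero_of_star_mul_self {t : A} (h : star t * t = 0) : t = 0 := by
  have := aux_eq_zero_of_mul_star_self (t := star t) (by simpa using h)
  simpa using this

lemma aux_norm_le_one {p : A} (hsa : IsSelfAdjoint p) (h2 : p * p = p) : ‖p‖ ≤ 1 := by
  have h1 : ‖p‖ * ‖p‖ = ‖p‖ := by
    conv_rhs => rw [← h2]
    rw [← CStarRing.norm_star_mul_self, hsa.star_eq]
  nlinarith [norm_nonneg p]

lemma aux_le_of_mul_eq {q f : A} (hqsa : IsSelfAdjoint q) (hq2 : q * q = q)
    (hfsa : IsSelfAdjoint f) (hf2 : f * f = f) (hqf : q * f = f) (hfq : f * q = f) :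
    f ≤ q := by
  have key : q - f = star (q - f) * (q - f) := by
    rw [star_sub, hqsa.star_eq, hfsa.star_eq, sub_mul, mul_sub, mul_sub, hq2, hf2, hqf, hfq]
    abel
  rw [← sub_nonneg, key]
  exact star_mul_self_nonneg _

lemma aux_mul_eq_of_le {q f : A} (hqsa : IsSelfAdjoint q) (hq2 : q * q = q)
    (hfsa : IsSelfAdjoint f) (hf2 : f * f = f) (hle : f ≤ q) : q * f = f := by
  have hf_nonneg : (0:A) ≤ f := by
    calc (0:A) ≤ star f * f := star_mul_self_nonneg f
    _ = f := by rw [hfsa.star_eq, hf2]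
  have hprod : ‖q‖ * (‖q‖ - 1) = 0 := by
    have h1 : ‖q‖ * ‖q‖ = ‖q‖ := by
      conv_rhs => rw [← hq2]
      rw [← CStarRing.norm_star_mul_self, hqsa.star_eq]
    nlinarith
  rcases mul_eq_zero.mp hprod with hq0 | hq1
  · -- q = 0, so f = 0
    have hq' : q = 0 := by simpa using norm_eq_zero.mp hq0
    have hf' : f = 0 := le_antisymm (hq' ▸ hle) hf_nonneg
    rw [hq', hf', mul_zero]
  · have hqnorm : ‖q‖ = 1 := by linarith [sub_eq_zero.mp hq1]
    -- f ≤ f * q * f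
    have h1 : f ≤ f * q * f := by
      have h := star_left_conjugate_nonneg (sub_nonneg.mpr hle) f
      rw [hfsa.star_eq] at h
      have hexp : f * (q - f) * f = f * q * f - f := by
        rw [mul_sub, sub_mul, hf2, hf2]
      rw [hexp] at h
      exact sub_nonneg.mp h
    -- f * q * f ≤ f
    have h2 : f * q * f ≤ f := by
      have h := CStarAlgebra.star_left_conjugate_le_norm_smul (a := f) (b := q) (hb := hqsa)
      rwa [hfsa.star_eq, hf2, hqnorm, one_smul] at h
    have hfqf : f * q * f = f := le_antisymm h2 h1
    -- t = q * f - f satisfies star t * t = 0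
    have ht : star (q * f - f) * (q * f - f) = 0 := by
      have e1 : (f * q) * (q * f) = f := by
        calc (f * q) * (q * f) = f * (q * q) * f := by noncomm_ring
        _ = f * q * f := by rw [hq2]
        _ = f := hfqf
      have e2 : f * (q * f) = f := by rw [← mul_assoc, hfqf]
      rw [star_sub, star_mul, hqsa.star_eq, hfsa.star_eq, sub_mul, mul_sub, mul_sub, e1, e2,
        hfqf, hf2]
      abel
    have := aux_eq_zero_of_star_mul_self ht
    exact sub_eq_zero.mp this




-- (copied aux lemmas assumed available via t3; re-declare here for testing)
/-- Easy direction core: if `p = v v*` is a projection and `v* v ≤ q` for a projection `q`,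
then `v q v* = p`. -/
lemma aux_easy {p q : A} (hp2 : p * p = p) (hqsa : IsSelfAdjoint q) (hq2 : q * q = q)
    {v : A} (hpv : p = v * star v) (hle : star v * v ≤ q)
    (aux_mul_eq_of_le : ∀ {q f : A}, IsSelfAdjoint q → q * q = q → IsSelfAdjoint f →
      f * f = f → f ≤ q → q * f = f) :
    v * q * star v = p := by
  have P2 : (v * star v) * (v * star v) = v * star v := by rw [← hpv]; exact hp2
  -- v is a partial isometry: v v* v = v
  have hvvv : v * star v * v = v := by
    have key : (v - v * star v * v) * star (v - v * star v * v)
        = (v * star v) - (v * star v) * (v * star v)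
          - ((v * star v) * (v * star v) - (v * star v) * (v * star v) * (v * star v)) := by
      simp only [star_sub, star_mul, star_star]
      noncomm_ring
    simp only [P2, sub_self, sub_zero] at key
    have := aux_eq_zero_of_mul_star_self key
    have := sub_eq_zero.mp this
    exact this.symm
  set f := star v * v with hf
  have hf2 : f * f = f := by
    calc f * f = star v * (v * star v * v) := by rw [hf]; noncomm_ring
    _ = f := by rw [hvvv]
  have hfsa : IsSelfAdjoint f := by
    rw [hf, IsSelfAdjoint, star_mul, star_star]
  have hqf : q * f = f := aux_mul_eq_of_le hqsa hq2 hfsa hf2 hle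
  have hfq : f * q = f := by
    have := congrArg star hqf
    rwa [star_mul, hqsa.star_eq, hfsa.star_eq] at this
  have hvf : v * f = v := by rw [hf, ← mul_assoc, hvvv]
  have hfv : f * star v = star v := by
    have := congrArg star hvf
    rwa [star_mul, hfsa.star_eq] at this
  calc v * q * star v = (v * f) * q * (f * star v) := by rw [hvf, hfv]
  _ = v * ((f * q) * f) * star v := by noncomm_ring
  _ = v * f * star v := by rw [hfq, hf2]
  _ = v * star v := by rw [hvf]
  _ = p := hpv.symm




lemma aux_hard {p q : A} (hpsa : IsSelfAdjoint p) (hp2 : p * p = p)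
    (hqsa : IsSelfAdjoint q) (hq2 : q * q = q)
    {x : A} (hx : ‖star x * q * x - p‖ < 1/2)
    (aux_le_of_mul_eq : ∀ {q f : A}, IsSelfAdjoint q → q * q = q → IsSelfAdjoint f →
      f * f = f → q * f = f → f * q = f → f ≤ q) :
    ∃ v : A, p = v * star v ∧ star v * v ≤ q := by
  set a := star x * q * x with ha
  set b := p * a * p with hb
  set y := p - b with hy
  have hasa : IsSelfAdjoint a := by
    rw [ha]; simp only [IsSelfAdjoint, star_mul, star_star, hqsa.star_eq, mul_assoc]
  have hbsa : IsSelfAdjoint b := by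
    rw [hb]; simp only [IsSelfAdjoint, star_mul, hpsa.star_eq, hasa.star_eq, mul_assoc]
  have hysa : IsSelfAdjoint y := by
    rw [hy]; simp only [IsSelfAdjoint, star_sub, hpsa.star_eq, hbsa.star_eq]
  have hpb : p * b = b := by
    calc p * b = (p * p) * a * p := by rw [hb]; noncomm_ring
    _ = b := by rw [hp2, hb]
  have hbp : b * p = b := by
    calc b * p = p * a * (p * p) := by rw [hb]; noncomm_ring
    _ = b := by rw [hp2, hb]
  have hpy : p * y = y := by rw [hy, mul_sub, hp2, hpb]
  have hyp : y * p = y := by rw [hy, sub_mul, hp2, hbp]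
  -- norm bound on y
  have hynorm : ‖y‖ < 1/2 := by
    have hrepr : p * ((p - a) * p) = y := by
      calc p * ((p - a) * p) = (p * p) * p - p * a * p := by noncomm_ring
      _ = p - b := by rw [hp2, hp2, hb]
    have hnp : ‖p‖ ≤ 1 := aux_norm_le_one hpsa hp2
    have hpa : ‖p - a‖ < 1/2 := by rwa [norm_sub_rev] at hx
    have h1 : ‖y‖ ≤ ‖p‖ * ‖(p - a) * p‖ := by rw [← hrepr]; exact norm_mul_le _ _
    have h2 : ‖(p - a) * p‖ ≤ ‖p - a‖ * ‖p‖ := norm_mul_le _ _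
    nlinarith [norm_nonneg p, norm_nonneg (p - a), norm_nonneg ((p - a) * p), norm_nonneg y]
  have hy1 : ‖y‖ < 1 := by linarith
  -- powers of y
  let pw : ℕ → A := fun n => Nat.rec y (fun _ ih => y * ih) n
  have pw_zero : pw 0 = y := rfl
  have pw_succ : ∀ n, pw (n+1) = y * pw n := fun _ => rfl
  have hpw_comm : ∀ n, pw n * y = y * pw n := by
    intro n
    induction n with
    | zero => rfl
    | succ n ih => rw [pw_succ, mul_assoc, ih, ← mul_assoc]
  have hpw_star : ∀ n, star (pw n) = pw n := by
    intro n
    induction n with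
    | zero => exact hysa.star_eq
    | succ n ih => rw [pw_succ, star_mul, ih, hysa.star_eq, hpw_comm]
  have hpw_p : ∀ n, pw n * p = pw n := by
    intro n
    induction n with
    | zero => exact hyp
    | succ n ih => rw [pw_succ, mul_assoc, ih]
  have hp_pw : ∀ n, p * pw n = pw n := by
    intro n
    induction n with
    | zero => exact hpy
    | succ n _ => rw [pw_succ, ← mul_assoc, hpy]
  have hpw_norm : ∀ n, ‖pw n‖ ≤ ‖y‖ ^ (n+1) := by
    intro n
    induction n with
    | zero => simp [pw_zero]
    | succ n ih =>
      calc ‖pw (n+1)‖ ≤ ‖y‖ * ‖pw n‖ := by rw [pw_succ]; exact norm_mul_le _ _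
      _ ≤ ‖y‖ * ‖y‖ ^ (n+1) := by
        exact mul_le_mul_of_nonneg_left ih (norm_nonneg y)
      _ = ‖y‖ ^ (n+1+1) := by ring
  have hsum : Summable pw := by
    have hgeo : Summable (fun n : ℕ => ‖y‖ * ‖y‖ ^ n) :=
      (summable_geometric_of_lt_one (norm_nonneg y) hy1).mul_left _
    have hgeo' : Summable (fun n : ℕ => ‖y‖ ^ (n+1)) := by
      simpa [pow_succ'] using hgeo
    exact Summable.of_norm_bounded hgeo' hpw_norm
  set S := ∑' n, pw n with hSdef
  have hS : HasSum pw S := hsum.hasSum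
  set c := p + S with hc
  -- S absorbs p
  have hSp : S * p = S := by
    have h := hS.mul_right p
    rw [show (fun n => pw n * p) = pw from funext hpw_p] at h
    exact h.unique hS
  have hpS : p * S = S := by
    have h := hS.mul_left p
    rw [show (fun n => p * pw n) = pw from funext hp_pw] at h
    exact h.unique hS
  -- star of S
  have hSstar : star S = S := by
    have h := hS.star
    rw [show (fun n => star (pw n)) = pw from funext hpw_star] at h
    exact h.unique hS
  -- geometric series identities
  have hmulr := hS.mul_right y
  rw [show (fun n => pw n * y) = fun n => pw (n+1) from
    funext fun n => by rw [hpw_comm n, ← pw_succ]] at hmulr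
  have hkey : S = y + S * y := by
    calc S = pw 0 + ∑' n, pw (n+1) := Summable.tsum_eq_zero_add hsum
    _ = y + S * y := by rw [pw_zero, hmulr.tsum_eq]
  have hmull := hS.mul_left y
  rw [show (fun n => y * pw n) = fun n => pw (n+1) from
    funext fun n => by rw [← pw_succ]] at hmull
  have hkey' : S = y + y * S := by
    calc S = pw 0 + ∑' n, pw (n+1) := Summable.tsum_eq_zero_add hsum
    _ = y + y * S := by rw [pw_zero, hmull.tsum_eq]
  have hSsub : S - S * y = y := by nth_rewrite 1 [hkey]; abel
  have hSsub' : S - y * S = y := by nth_rewrite 1 [hkey']; abel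
  -- the corner inverse
  have hcb : c * b = p := by
    have hby : b = p - y := by rw [hy]; abel
    calc c * b = (p * p - p * y) + (S * p - S * y) := by rw [hc, hby]; noncomm_ring
    _ = (p - y) + (S - S * y) := by rw [hp2, hpy, hSp]
    _ = p := by rw [hSsub]; abel
  have hbc : b * c = p := by
    have hby : b = p - y := by rw [hy]; abel
    calc b * c = (p * p - y * p) + (p * S - y * S) := by rw [hc, hby]; noncomm_ring
    _ = (p - y) + (S - y * S) := by rw [hp2, hyp, hpS]
    _ = p := by rw [hSsub']; abel
  have hcsa : star c = c := by rw [hc, star_add, hpsa.star_eq, hSstar]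
  have hpc : p * c = c := by rw [hc, mul_add, hp2, hpS]
  have hcp : c * p = c := by rw [hc, add_mul, hp2, hSp]
  -- b = w w*
  set w := p * star x * q with hw
  have hwstar : star w = q * x * p := by
    rw [hw]; simp only [star_mul, star_star, hqsa.star_eq, hpsa.star_eq, mul_assoc]
  have hwb : w * star w = b := by
    calc w * star w = p * star x * (q * q) * x * p := by rw [hwstar, hw]; noncomm_ring
    _ = p * a * p := by rw [hq2, ha]; noncomm_ring
    _ = b := hb.symm
  -- c is nonneg
  have hcbc : c * b * c = c := by rw [mul_assoc, hbc, hcp]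
  have hc_nonneg : (0:A) ≤ c := by
    have hform : (c * w) * star (c * w) = c := by
      rw [star_mul, hcsa]
      calc (c * w) * (star w * c) = c * (w * star w) * c := by noncomm_ring
      _ = c * b * c := by rw [hwb]
      _ = c := hcbc
    rw [← hform]
    exact mul_star_self_nonneg _
  -- square root
  set s := CFC.sqrt c with hs
  have hss : s * s = c := CFC.sqrt_mul_sqrt_self c hc_nonneg
  have hs0 : (0:A) ≤ s := hs ▸ CFC.sqrt_nonneg c
  have hssa : star s = s := (IsSelfAdjoint.of_nonneg hs0).star_eq
  -- s absorbs p
  have hzc : (s - s * p) * c = 0 := by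
    calc (s - s * p) * c = s * c - s * (p * c) := by noncomm_ring
    _ = 0 := by rw [hpc, sub_self]
  have hzs : (s - s * p) * s = 0 := by
    apply aux_eq_zero_of_mul_star_self
    calc ((s - s * p) * s) * star ((s - s * p) * s)
        = ((s - s * p) * (s * s)) * star (s - s * p) := by rw [star_mul, hssa]; noncomm_ring
    _ = ((s - s * p) * c) * star (s - s * p) := by rw [hss]
    _ = 0 := by rw [hzc, zero_mul]
  have hsps : s * p * s = c := by
    have h : s * s - s * p * s = 0 := by
      calc s * s - s * p * s = (s - s * p) * s := by noncomm_ring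
      _ = 0 := hzs
    have := sub_eq_zero.mp h
    rw [← this, hss]
  have hsp : s * p = s := by
    have hz : (s - s * p) * star (s - s * p) = 0 := by
      have hstz : star (s - s * p) = s - p * s := by
        rw [star_sub, star_mul, hssa, hpsa.star_eq]
      calc (s - s * p) * star (s - s * p)
          = s * s - s * p * s - s * p * s + s * (p * p) * s := by
            rw [hstz]; noncomm_ring
      _ = c - c - c + c := by rw [hss, hp2, hsps]
      _ = 0 := by abel
    have := aux_eq_zero_of_mul_star_self hz
    have := sub_eq_zero.mp this
    exact this.symm
  have hps : p * s = s := by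
    have := congrArg star hsp
    rwa [star_mul, hssa, hpsa.star_eq] at this
  -- e := s * b * s equals p
  have hsc : s * c = c * s := by
    rw [← hss, ← mul_assoc]
  have h1 : (s * b * s) * c = c := by
    calc (s * b * s) * c = (s * b) * (s * c) := by noncomm_ring
    _ = (s * b) * (c * s) := by rw [hsc]
    _ = s * (b * c) * s := by noncomm_ring
    _ = s * p * s := by rw [hbc]
    _ = c := hsps
  have h2 : (s * b * s) * p = p := by
    calc (s * b * s) * p = (s * b * s) * (c * b) := by rw [hcb]
    _ = ((s * b * s) * c) * b := by noncomm_ring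
    _ = c * b := by rw [h1]
    _ = p := hcb
  have h3 : (s * b * s) * p = s * b * s := by
    calc (s * b * s) * p = (s * b) * (s * p) := by noncomm_ring
    _ = s * b * s := by rw [hsp]
  have hsbs : s * b * s = p := by rw [← h3, h2]
  -- the element v
  refine ⟨s * w, ?_, ?_⟩
  · -- p = v v*
    rw [star_mul, hssa]
    calc p = s * b * s := hsbs.symm
    _ = s * (w * star w) * s := by rw [hwb]
    _ = s * w * (star w * s) := by noncomm_ring
  · -- f := v* v ≤ q
    have hfrepr : star (s * w) * (s * w) = star w * c * w := by
      calc star (s * w) * (s * w) = (star w * s) * (s * w) := by rw [star_mul, hssa]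
      _ = star w * (s * s) * w := by noncomm_ring
      _ = star w * c * w := by rw [hss]
    have hf2 : (star w * c * w) * (star w * c * w) = star w * c * w := by
      calc (star w * c * w) * (star w * c * w)
          = star w * (c * (w * star w) * c) * w := by noncomm_ring
      _ = star w * (c * b * c) * w := by rw [hwb]
      _ = star w * c * w := by rw [hcbc]
    have hfsa : IsSelfAdjoint (star w * c * w) := by
      simp only [IsSelfAdjoint, star_mul, star_star, hcsa, mul_assoc]
    have hqw : q * star w = star w := by
      rw [hwstar]
      calc q * (q * x * p) = (q * q) * x * p := by noncomm_ring
      _ = q * x * p := by rw [hq2]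
    have hwq : w * q = w := by
      rw [hw]
      calc p * star x * q * q = p * star x * (q * q) := by noncomm_ring
      _ = p * star x * q := by rw [hq2]
    have hqf : q * (star w * c * w) = star w * c * w := by
      calc q * (star w * c * w) = (q * star w) * c * w := by noncomm_ring
      _ = star w * c * w := by rw [hqw]
    have hfq : (star w * c * w) * q = star w * c * w := by
      calc (star w * c * w) * q = star w * c * (w * q) := by noncomm_ring
      _ = star w * c * w := by rw [hwq]
    rw [hfrepr]
    exact aux_le_of_mul_eq hqsa hq2 hfsa hf2 hqf hfq

end CuntzAux

/-- For projections `p, q` in a C⋆-algebra, `p` is Cuntz subequivalent to `q` (i.e.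
`xₖ* q xₖ → p` for some sequence `(xₖ)`) if and only if `p` is equivalent to a
subprojection of `q`. -/
theorem cuntz_subequiv_iff_subprojection
    {A : Type*} [NonUnitalCStarAlgebra A] [PartialOrder A] [StarOrderedRing A]
    (p q : A) (hp : IsSelfAdjoint p ∧ p * p = p) (hq : IsSelfAdjoint q ∧ q * q = q) :
    (∃ x : ℕ → A, Filter.Tendsto (fun k : ℕ => ‖star (x k) * q * x k - p‖)
        Filter.atTop (nhds 0)) ↔
      ∃ v : A, p = v * star v ∧ star v * v ≤ q := by
  constructor
  · rintro ⟨x, hx⟩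
    have hev : ∀ᶠ k in atTop, ‖star (x k) * q * x k - p‖ < 1/2 :=
      hx.eventually (gt_mem_nhds (by norm_num : (0:ℝ) < 1/2))
    obtain ⟨k, hk⟩ := hev.exists
    exact aux_hard hp.1 hp.2 hq.1 hq.2 hk (fun hq hq2 hf hf2 hqf hfq =>
      aux_le_of_mul_eq hq hq2 hf hf2 hqf hfq)
  · rintro ⟨v, hpv, hle⟩
    refine ⟨fun _ => star v, ?_⟩
    have hkey : v * q * star v = p :=
      aux_easy hp.2 hq.1 hq.2 hpv hle (fun hq hq2 hf hf2 hle =>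
        aux_mul_eq_of_le hq hq2 hf hf2 hle)
    have : (fun k : ℕ => ‖star ((fun _ : ℕ => star v) k) * q * (fun _ : ℕ => star v) k - p‖)
        = fun _ : ℕ => (0:ℝ) := by
      funext k
      simp only [star_star, hkey, sub_self, norm_zero]
    rw [this]
    exact tendsto_const_nhds
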